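/- Let h : (0, 2π) → ℝ be defined by h(y) = (sin(y/2))^{1/3}. Then for every y ∈ (0, 2π), h is twice differentiable at y and 3·h''(y) + cot(y/2)·h'(y) = −(1/4)·h(y). Equivalently, the function f(t,y) = e^{−t/4}·(sin(y/2))^{1/3} satisfies ∂_t f(t,y) = 3·∂²_y f(t,y) + cot(y/2)·∂_y f(t,y) for all t ∈ ℝ and y ∈ (0, 2π). -/

import Mathlib

open Real

private lemma sin_half_pos' {y : ℝ} (hy : y ∈ Set.Ioo (0:ℝ) (2*Real.pi)) :
    0 < Real.sin (y/2) := by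
  apply Real.sin_pos_of_pos_of_lt_pi <;> [linarith [hy.1]; linarith [hy.2]]

private lemma hasDerivAt_h' {y : ℝ} (hs : 0 < Real.sin (y/2)) :
    HasDerivAt (fun y => Real.sin (y / 2) ^ ((1 : ℝ) / 3))
      ((1/6) * (Real.cos (y/2) * Real.sin (y/2) ^ ((1:ℝ)/3 - 1))) y := by
  have h1 : HasDerivAt (fun y : ℝ => y / 2) (1/2) y := (hasDerivAt_id y).div_const 2
  have h2 : HasDerivAt (fun y : ℝ => Real.sin (y/2)) (Real.cos (y/2) * (1/2)) y :=
    by have := (Real.hasDerivAt_sin (y/2)).comp y h1; exact this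
  have h3 := h2.rpow_const (p := (1:ℝ)/3) (Or.inl hs.ne')
  convert h3 using 1
  ring

private lemma hasDerivAt_c' {y : ℝ} (hs : 0 < Real.sin (y/2)) :
    HasDerivAt (fun y => (1/6) * (Real.cos (y/2) * Real.sin (y/2) ^ ((1:ℝ)/3 - 1)))
      ((1/6) * ((-Real.sin (y/2) * (1/2)) * Real.sin (y/2) ^ ((1:ℝ)/3 - 1)
        + Real.cos (y/2) * (Real.cos (y/2) * (1/2) * ((1:ℝ)/3 - 1)
            * Real.sin (y/2) ^ ((1:ℝ)/3 - 1 - 1)))) y := by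
  have h1 : HasDerivAt (fun y : ℝ => y / 2) (1/2) y := (hasDerivAt_id y).div_const 2
  have h2 : HasDerivAt (fun y : ℝ => Real.sin (y/2)) (Real.cos (y/2) * (1/2)) y :=
    by have := (Real.hasDerivAt_sin (y/2)).comp y h1; exact this
  have hc : HasDerivAt (fun y : ℝ => Real.cos (y/2)) (-Real.sin (y/2) * (1/2)) y :=
    by have := (Real.hasDerivAt_cos (y/2)).comp y h1; exact this
  have hr := h2.rpow_const (p := (1:ℝ)/3 - 1) (Or.inl hs.ne')
  have := (hc.mul hr).const_mul (1/6 : ℝ)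
  exact this

/-- The function `h(y) = (sin(y/2))^(1/3)` is, on `(0, 2π)`, a twice differentiable
eigenfunction of the generator `L = 3 ∂² + cot(y/2) ∂` with eigenvalue `-1/4`; equivalently,
`f(t,y) = e^(−t/4) (sin(y/2))^(1/3)` satisfies `∂_t f = 3 ∂²_y f + cot(y/2) ∂_y f`. -/
theorem stmt_4
    (h : ℝ → ℝ) (hdef : h = fun y => Real.sin (y / 2) ^ ((1 : ℝ) / 3))
    (f : ℝ → ℝ → ℝ)
    (fdef : f = fun t y => Real.exp (-t / 4) * Real.sin (y / 2) ^ ((1 : ℝ) / 3)) :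
    (∀ y ∈ Set.Ioo (0 : ℝ) (2 * Real.pi),
      DifferentiableAt ℝ h y ∧ DifferentiableAt ℝ (deriv h) y ∧
      3 * deriv (deriv h) y + Real.cot (y / 2) * deriv h y = -(1 / 4) * h y) ∧
    (∀ t : ℝ, ∀ y ∈ Set.Ioo (0 : ℝ) (2 * Real.pi),
      deriv (fun t' => f t' y) t =
        3 * deriv (deriv fun y' => f t y') y + Real.cot (y / 2) * deriv (fun y' => f t y') y) := by
  subst hdef fdef
  have main : ∀ y ∈ Set.Ioo (0 : ℝ) (2 * Real.pi),
      DifferentiableAt ℝ (fun y => Real.sin (y / 2) ^ ((1 : ℝ) / 3)) y ∧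
      DifferentiableAt ℝ (deriv (fun y => Real.sin (y / 2) ^ ((1 : ℝ) / 3))) y ∧
      3 * deriv (deriv (fun y => Real.sin (y / 2) ^ ((1 : ℝ) / 3))) y
        + Real.cot (y / 2) * deriv (fun y => Real.sin (y / 2) ^ ((1 : ℝ) / 3)) y
        = -(1 / 4) * Real.sin (y / 2) ^ ((1 : ℝ) / 3) := by
    intro y hy
    have hs := sin_half_pos' hy
    set s := Real.sin (y/2) with hsdef
    have hev : deriv (fun y => Real.sin (y / 2) ^ ((1 : ℝ) / 3))
        =ᶠ[nhds y] fun y => (1/6) * (Real.cos (y/2) * Real.sin (y/2) ^ ((1:ℝ)/3 - 1)) := by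
      filter_upwards [isOpen_Ioo.mem_nhds hy] with z hz
      exact (hasDerivAt_h' (sin_half_pos' hz)).deriv
    have hD1 : deriv (fun y => Real.sin (y / 2) ^ ((1 : ℝ) / 3)) y
        = (1/6) * (Real.cos (y/2) * s ^ ((1:ℝ)/3 - 1)) := (hasDerivAt_h' hs).deriv
    have hD2 : HasDerivAt (deriv (fun y => Real.sin (y / 2) ^ ((1 : ℝ) / 3)))
        ((1/6) * ((-s * (1/2)) * s ^ ((1:ℝ)/3 - 1)
          + Real.cos (y/2) * (Real.cos (y/2) * (1/2) * ((1:ℝ)/3 - 1)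
              * s ^ ((1:ℝ)/3 - 1 - 1)))) y :=
      (hasDerivAt_c' hs).congr_of_eventuallyEq hev
    refine ⟨(hasDerivAt_h' hs).differentiableAt, hD2.differentiableAt, ?_⟩
    rw [hD2.deriv, hD1, Real.cot_eq_cos_div_sin]
    have e1 : s ^ ((1:ℝ)/3 - 1 - 1) = s ^ ((1:ℝ)/3 - 2) := by norm_num
    have e2 : s ^ ((1:ℝ)/3 - 1) = s ^ ((1:ℝ)/3 - 2) * s := by
      rw [← Real.rpow_add_one hs.ne']; norm_num
    have e3 : s ^ ((1:ℝ)/3) = s ^ ((1:ℝ)/3 - 2) * s * s := by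
      rw [← Real.rpow_add_one hs.ne', ← Real.rpow_add_one hs.ne']; norm_num
    rw [e1, e2, e3]
    rw [← hsdef]
    field_simp
    ring
  refine ⟨main, ?_⟩
  intro t y hy
  obtain ⟨-, -, heq⟩ := main y hy
  have hK : HasDerivAt (fun t' : ℝ => Real.exp (-t' / 4) * Real.sin (y / 2) ^ ((1 : ℝ) / 3))
      ((Real.exp (-t/4) * (-(1/4))) * Real.sin (y / 2) ^ ((1 : ℝ) / 3)) t := by
    have hin : HasDerivAt (fun t' : ℝ => -t' / 4) (-(1/4)) t := by
      have := ((hasDerivAt_id t).neg).div_const 4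
      simp only [Pi.neg_apply, id_eq] at this
      refine this.congr_deriv ?_
      norm_num
    exact ((Real.hasDerivAt_exp (-t/4)).comp t hin).mul_const _
  rw [hK.deriv]
  have hy1 : (deriv fun y' => Real.exp (-t / 4) * Real.sin (y' / 2) ^ ((1 : ℝ) / 3))
      = fun y' => Real.exp (-t / 4) * deriv (fun y => Real.sin (y / 2) ^ ((1 : ℝ) / 3)) y' :=
    deriv_const_mul_field' _
  rw [hy1, deriv_const_mul_field]
  calc Real.exp (-t/4) * (-(1/4)) * Real.sin (y / 2) ^ ((1 : ℝ) / 3)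
      = Real.exp (-t/4) * (3 * deriv (deriv (fun y => Real.sin (y / 2) ^ ((1 : ℝ) / 3))) y
          + Real.cot (y / 2) * deriv (fun y => Real.sin (y / 2) ^ ((1 : ℝ) / 3)) y) := by
        rw [heq]; ring
    _ = _ := by ring
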